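/- Let A be a Hilbert algebra and φ a multiplier on A. Then φ is monotone (x ≤ y implies φ(x) ≤ φ(y)) if and only if its kernel K_φ = {x ∈ A : φ(x) = 1} is a filter of A. -/
import Mathlib


/-- A Hilbert algebra: a set with implication `imp` and constant `one`. -/
class HilbertAlgebra (A : Type*) where
  imp : A → A → A
  one : A
  imp_one : ∀ x y : A, imp x (imp y x) = one
  imp_distrib : ∀ x y z : A,
    imp (imp x (imp y z)) (imp (imp x y) (imp x z)) = one
  imp_antisymm : ∀ x y : A, imp x y = one → imp y x = one → x = y

namespace HilbertAlgebra

variable {A : Type*} [HilbertAlgebra A]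

/-- The natural order of a Hilbert algebra: `x ≤ y` iff `x → y = 1`. -/
def le (x y : A) : Prop := imp x y = one

/-- A multiplier on a Hilbert algebra. -/
def IsMultiplier (φ : A → A) : Prop := ∀ x y : A, φ (imp x y) = imp x (φ y)

/-- A filter of a Hilbert algebra. -/
def IsFilter (J : Set A) : Prop :=
  (one : A) ∈ J ∧ ∀ x y : A, x ∈ J → imp x y ∈ J → y ∈ J

lemma imp_mp {a : A} (h : imp one a = one) : a = one := by
  have k := imp_one a one
  rw [h] at k
  exact imp_antisymm a one k h

lemma imp_self (x : A) : imp x x = one := by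
  have s := imp_distrib x (imp x x) x
  rw [imp_one x (imp x x), imp_one x x] at s
  exact imp_mp (imp_mp s)

lemma imp_top (a : A) : imp a one = one := by
  have h := imp_one a a
  rw [imp_self a] at h
  exact h

lemma one_imp (a : A) : imp one a = a := by
  have s := imp_distrib (imp one a) one a
  rw [imp_self (imp one a), imp_top (imp one a)] at s
  exact imp_antisymm (imp one a) a (imp_mp (imp_mp s)) (imp_one a one)

lemma imp_mono_right {x y : A} (c : A) (h : imp x y = one) :
    imp (imp c x) (imp c y) = one := by
  have s := imp_distrib c x y
  rw [h, imp_top c] at s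
  exact imp_mp s

lemma le_trans' {a b c : A} (h1 : imp a b = one) (h2 : imp b c = one) :
    imp a c = one := by
  have h := imp_mono_right a h2
  rw [h1] at h
  exact imp_mp h

lemma le_peirce (a b : A) : imp a (imp (imp a b) b) = one := by
  have s := imp_distrib (imp a b) a b
  rw [imp_self (imp a b)] at s
  exact le_trans' (imp_one a (imp a b)) (imp_mp s)

lemma imp_anti {a b : A} (c : A) (h : imp a b = one) :
    imp (imp b c) (imp a c) = one := by
  have s := imp_distrib a b c
  rw [h, one_imp] at s
  exact le_trans' (imp_one (imp b c) a) s

lemma contraction {a b : A} (h : imp a (imp a b) = one) : imp a b = one := by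
  have s := imp_distrib a a b
  rw [h, imp_self a, one_imp] at s
  exact imp_mp s

lemma phi_one {φ : A → A} (hφ : IsMultiplier φ) : φ one = one := by
  have h := hφ (φ one) one
  rw [imp_top (φ one)] at h
  rw [imp_self (φ one)] at h
  exact h

/-- A multiplier is monotone iff its kernel is a filter. -/
theorem multiplier_monotone_iff_kernel_filter (φ : A → A) (hφ : IsMultiplier φ) :
    (∀ x y : A, le x y → le (φ x) (φ y)) ↔
      IsFilter {x : A | φ x = one} := by
  constructor
  · intro hmono
    refine ⟨phi_one hφ, ?_⟩
    intro x y hx hxy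
    have hx' : φ x = one := hx
    have hxy' : φ (imp x y) = one := hxy
    have h1 : imp x (φ y) = one := by rw [← hφ x y]; exact hxy'
    have h2 : φ (φ y) = one := by
      have h := hmono x (φ y) h1
      unfold le at h
      rw [hx', one_imp] at h
      exact h
    have h3 : imp (φ y) (imp (imp (φ y) y) y) = one := le_peirce (φ y) y
    have h4 := hmono _ _ h3
    unfold le at h4
    rw [h2, one_imp, hφ] at h4
    have h5 : imp (imp (φ y) y) (imp (imp (φ y) y) y) = one := imp_anti y h4
    have h6 : imp (imp (φ y) y) y = one := contraction h5
    have h7 := hmono _ _ h6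
    unfold le at h7
    rw [hφ, imp_self (φ y), one_imp] at h7
    exact h7
  · rintro ⟨h1, h2⟩ x y hxy
    unfold le at hxy ⊢
    have s : φ (imp (φ x) x) = one := by rw [hφ]; exact imp_self (φ x)
    have t : imp (imp (φ x) x) (imp (φ x) y) = one := imp_mono_right (φ x) hxy
    have t' : φ (imp (imp (φ x) x) (imp (φ x) y)) = one := by
      rw [t]; exact phi_one hφ
    have h := h2 _ _ s t'
    have h' : φ (imp (φ x) y) = one := h
    rw [hφ] at h'
    exact h'

end HilbertAlgebra
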